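/- arXiv:0707.0707 — 5 statements merged into one kernel-verified Lean document; each statement's English description precedes it below -/
import Mathlib

section
/- Let F : T → T' be a full, coproduct-preserving triangulated functor between triangulated categories with coproducts, and let S be a set of objects of T. Then the essential image of the restriction of F to the smallest localizing triangulated subcategory ⟨S⟩ generated by S equals the smallest localizing triangulated subcategory of T' generated by F(S). -/
open CategoryTheory Category Limits Pretriangulated Opposite

universe w v u v' u'

variable (T : Type u) [Category.{v} T] [HasZeroObject T] [HasShift T ℤ] [Preadditive T]
  [∀ n : ℤ, (shiftFunctor T n).Additive] [Pretriangulated T] [HasCoproducts.{w} T]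

/-- A localizing triangulated subcategory: a class of objects closed under isomorphisms,
shifts, triangles (two-out-of-three) and arbitrary (`Type w`-indexed) coproducts. -/
def IsLocalizing (S : Set T) : Prop :=
  (∀ X ∈ S, ∀ Y : T, Nonempty (X ≅ Y) → Y ∈ S) ∧
  (∀ X ∈ S, ∀ n : ℤ, X⟦n⟧ ∈ S) ∧
  (∀ Tr ∈ distTriang T, Tr.obj₁ ∈ S → Tr.obj₂ ∈ S → Tr.obj₃ ∈ S) ∧
  (∀ (ι : Type w) (f : ι → T), (∀ k, f k ∈ S) → (∐ f) ∈ S)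

/-- The smallest localizing triangulated subcategory containing `S`. -/
def locClosure (S : Set T) : Set T := ⋂₀ {L | IsLocalizing.{w} T L ∧ S ⊆ L}

lemma subset_locClosure (S : Set T) : S ⊆ locClosure.{w} T S :=
  fun _ hx _ hL => hL.2 hx

lemma locClosure_subset {S L : Set T} (hL : IsLocalizing.{w} T L) (hS : S ⊆ L) :
    locClosure.{w} T S ⊆ L := fun _ hx => hx L ⟨hL, hS⟩

lemma isLocalizing_locClosure (S : Set T) : IsLocalizing.{w} T (locClosure.{w} T S) := by
  refine ⟨fun X hX Y hXY L hL => hL.1.1 X (hX L hL) Y hXY,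
    fun X hX n L hL => hL.1.2.1 X (hX L hL) n,
    fun Tr hTr h1 h2 L hL => hL.1.2.2.1 Tr hTr (h1 L hL) (h2 L hL),
    fun ι f hf L hL => hL.1.2.2.2 ι f (fun k => hf k L hL)⟩

/-- For a full, coproduct-preserving triangulated functor `F` and a set of
objects `S`, the essential image of the restriction of `F` to `⟨S⟩` equals `⟨F(S)⟩`. -/
theorem stmt_1 (T' : Type u') [Category.{v'} T'] [HasZeroObject T'] [HasShift T' ℤ]
    [Preadditive T'] [∀ n : ℤ, (shiftFunctor T' n).Additive] [Pretriangulated T']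
    [HasCoproducts.{w} T']
    (F : T ⥤ T') [F.Full] [F.CommShift ℤ] [F.IsTriangulated]
    [∀ ι : Type w, PreservesColimitsOfShape (Discrete ι) F]
    (S : Set T) :
    {Y : T' | ∃ X ∈ locClosure.{w} T S, Nonempty (F.obj X ≅ Y)} =
      locClosure.{w} T' (F.obj '' S) := by
  have hcl' := isLocalizing_locClosure.{w} T' (F.obj '' S)
  have hcl := isLocalizing_locClosure.{w} T S
  apply subset_antisymm
  · -- LHS ⊆ RHS
    rintro Y ⟨X, hX, ⟨e⟩⟩
    -- show F.obj X ∈ RHS by considering the preimage set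
    have key : X ∈ {Z : T | F.obj Z ∈ locClosure.{w} T' (F.obj '' S)} := by
      refine locClosure_subset.{w} T ?_ ?_ hX
      · refine ⟨?_, ?_, ?_, ?_⟩
        · rintro A hA B ⟨i⟩
          exact hcl'.1 _ hA _ ⟨F.mapIso i⟩
        · intro A hA n
          exact hcl'.1 _ (hcl'.2.1 _ hA n) _ ⟨((F.commShiftIso n).app A).symm⟩
        · intro Tr hTr h1 h2
          exact hcl'.2.2.1 (F.mapTriangle.obj Tr) (F.map_distinguished Tr hTr) h1 h2
        · intro ι f hf
          refine hcl'.1 _ (hcl'.2.2.2 ι (fun k => F.obj (f k)) hf) _ ?_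
          exact ⟨asIso (sigmaComparison F f)⟩
      · intro s hs
        exact subset_locClosure.{w} T' _ ⟨s, hs, rfl⟩
    exact hcl'.1 _ key _ ⟨e⟩
  · -- RHS ⊆ LHS : LHS is localizing and contains F(S)
    refine locClosure_subset.{w} T' ?_ ?_
    · refine ⟨?_, ?_, ?_, ?_⟩
      · rintro A ⟨X, hX, ⟨e⟩⟩ B ⟨i⟩
        exact ⟨X, hX, ⟨e ≪≫ i⟩⟩
      · rintro A ⟨X, hX, ⟨e⟩⟩ n
        exact ⟨X⟦n⟧, hcl.2.1 X hX n,
          ⟨(F.commShiftIso n).app X ≪≫ (shiftFunctor T' n).mapIso e⟩⟩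
      · rintro Tr hTr ⟨X, hX, ⟨e₁⟩⟩ ⟨Y, hY, ⟨e₂⟩⟩
        obtain ⟨f, hf⟩ := F.map_surjective (e₁.hom ≫ Tr.mor₁ ≫ e₂.inv)
        obtain ⟨Z, g, h, hT₀⟩ := Pretriangulated.distinguished_cocone_triangle f
        have hFT₀ := F.map_distinguished _ hT₀
        have comm : (F.mapTriangle.obj (Triangle.mk f g h)).mor₁ ≫ e₂.hom
            = e₁.hom ≫ Tr.mor₁ := by
          show F.map f ≫ e₂.hom = _
          rw [hf]
          simp
        have iso := Pretriangulated.isoTriangleOfIso₁₂ _ _ hFT₀ hTr e₁ e₂ comm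
        exact ⟨Z, hcl.2.2.1 _ hT₀ hX hY,
          ⟨(Triangle.π₃.mapIso iso : _)⟩⟩
      · intro ι f hf
        choose g hg e using hf
        refine ⟨∐ g, hcl.2.2.2 ι g hg, ?_⟩
        exact ⟨(asIso (sigmaComparison F g)).symm ≪≫
          Sigma.mapIso (fun k => (e k).some)⟩
    · rintro Y ⟨s, hs, rfl⟩
      exact ⟨s, subset_locClosure.{w} T S hs, ⟨Iso.refl _⟩⟩
end

section
/- Let j^* : T → T'' be a triangulated functor admitting a fully faithful left adjoint j_!. Then the essential image of j_! equals the kernel of the left adjoint i^* of the inclusion ker j^* ↪ T, and both are equal to the left-orthogonal ^⊥(ker j^*), i.e., the full subcategory of objects X with T(X, Σ^n Y) = 0 for all Y in ker j^* and all integers n. -/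
open CategoryTheory Category Limits Pretriangulated Opposite

universe v₂ u₂ v₃ u₃

variable {T : Type u₂} [Category.{v₂} T] [HasZeroObject T] [HasShift T ℤ] [Preadditive T]
  [∀ n : ℤ, (shiftFunctor T n).Additive] [Pretriangulated T]
variable {T'' : Type u₃} [Category.{v₃} T''] [HasZeroObject T''] [HasShift T'' ℤ] [Preadditive T'']
  [∀ n : ℤ, (shiftFunctor T'' n).Additive] [Pretriangulated T'']

/-- If `j^*` admits a fully faithful left adjoint `j_!`, and `i^*` is a left
adjoint of the inclusion `ker j^* ↪ T`, then
`essim j_! = ker i^* = ^⊥(ker j^*)`, where `^⊥(ker j^*)` consists of the objects `X` with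
`T(X, Σ^n Y) = 0` for all `Y ∈ ker j^*` and all `n ∈ ℤ`. -/
theorem stmt_8 (jS : T ⥤ T'') (jL : T'' ⥤ T)
    [jS.CommShift ℤ] [jL.CommShift ℤ] [jS.IsTriangulated] [jL.IsTriangulated]
    (adj : jL ⊣ jS) [jL.Full] [jL.Faithful]
    (iL : T ⥤ ObjectProperty.FullSubcategory fun X : T => IsZero (jS.obj X))
    (adj' : iL ⊣ ObjectProperty.ι fun X : T => IsZero (jS.obj X)) :
    ({X : T | ∃ Y : T'', Nonempty (jL.obj Y ≅ X)} = {X : T | IsZero (iL.obj X)}) ∧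
    ({X : T | IsZero (iL.obj X)} =
      {X : T | ∀ (n : ℤ) (Y : T), IsZero (jS.obj Y) → ∀ f : X ⟶ Y⟦n⟧, f = 0}) := by
  -- shifts of kernel objects stay in the kernel
  have hker : ∀ (n : ℤ) (Y : T), IsZero (jS.obj Y) → IsZero (jS.obj (Y⟦n⟧)) := by
    intro n Y hY
    exact (((shiftFunctor T'' n).map_isZero hY)).of_iso ((jS.commShiftIso n).app Y)
  -- any map from an object in the image of `jL` to a kernel object is zero
  have hL : ∀ (W : T'') (Z : T), IsZero (jS.obj Z) → ∀ f : jL.obj W ⟶ Z, f = 0 := by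
    intro W Z hZ f
    have h0 : (adj.homEquiv W Z) f = 0 := hZ.eq_zero_of_tgt _
    have := (adj.homEquiv W Z).symm_apply_apply f
    rw [h0] at this
    rw [← this, Adjunction.homEquiv_counit, Functor.map_zero, zero_comp]
  -- left-orthogonality implies maps to unshifted kernel objects vanish
  have hOrth0 : ∀ X : T, (∀ (n : ℤ) (Y : T), IsZero (jS.obj Y) → ∀ f : X ⟶ Y⟦n⟧, f = 0) →
      ∀ Z : T, IsZero (jS.obj Z) → ∀ f : X ⟶ Z, f = 0 := by
    intro X hX Z hZ f
    have h0 : f ≫ ((shiftFunctorZero T ℤ).app Z).inv = 0 := hX 0 Z hZ _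
    calc f = (f ≫ ((shiftFunctorZero T ℤ).app Z).inv) ≫ ((shiftFunctorZero T ℤ).app Z).hom := by
            simp
      _ = 0 := by rw [h0, zero_comp]
  -- essential image of `jL` is contained in the left orthogonal
  have hA : ∀ X : T, (∃ Y : T'', Nonempty (jL.obj Y ≅ X)) →
      ∀ (n : ℤ) (Y : T), IsZero (jS.obj Y) → ∀ f : X ⟶ Y⟦n⟧, f = 0 := by
    rintro X ⟨W, ⟨e⟩⟩ n Y hY f
    have h0 : e.hom ≫ f = 0 := hL W (Y⟦n⟧) (hker n Y hY) _
    calc f = e.inv ≫ e.hom ≫ f := by simp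
      _ = 0 := by rw [h0, comp_zero]
  -- left orthogonal is contained in the essential image of `jL`
  have hB : ∀ X : T, (∀ (n : ℤ) (Y : T), IsZero (jS.obj Y) → ∀ f : X ⟶ Y⟦n⟧, f = 0) →
      ∃ Y : T'', Nonempty (jL.obj Y ≅ X) := by
    intro X hX
    obtain ⟨Z, g, h, hT⟩ := Pretriangulated.distinguished_cocone_triangle (adj.counit.app X)
    have h1 : adj.unit.app (jS.obj X) ≫ jS.map (adj.counit.app X) = 𝟙 _ :=
      adj.right_triangle_components X
    have h2 : IsIso (adj.unit.app (jS.obj X) ≫ jS.map (adj.counit.app X)) := by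
      rw [h1]; infer_instance
    have hiso : IsIso (jS.map (adj.counit.app X)) :=
      IsIso.of_isIso_comp_left (adj.unit.app (jS.obj X)) _
    have hZ : IsZero (jS.obj Z) := by
      have := Pretriangulated.Triangle.isZero₃_of_isIso₁ _
        (jS.map_distinguished _ hT) (by dsimp; exact hiso)
      exact this
    have hg : g = 0 := hOrth0 X hX Z hZ g
    obtain ⟨r, hr⟩ := Pretriangulated.Triangle.yoneda_exact₃ _ hT (𝟙 Z)
      (by dsimp; rw [hg]; exact zero_comp)
    have hrz : r = 0 := by
      set e := (jL.commShiftIso (1 : ℤ)).app (jS.obj X)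
      have h0 : e.hom ≫ r = 0 := hL _ Z hZ _
      have h1 := e.inv_hom_id_assoc r
      rw [h0, comp_zero] at h1
      exact h1.symm
    have hZzero : IsZero Z := by
      rw [IsZero.iff_id_eq_zero]
      rw [hr, hrz, comp_zero]
      rfl
    have : IsIso (adj.counit.app X) :=
      (Pretriangulated.Triangle.isZero₃_iff_isIso₁ _ hT).1 hZzero
    exact ⟨jS.obj X, ⟨asIso (adj.counit.app X)⟩⟩
  -- kernel of `iL` is contained in the left orthogonal
  have hC : ∀ X : T, IsZero (iL.obj X) →
      ∀ (n : ℤ) (Y : T), IsZero (jS.obj Y) → ∀ f : X ⟶ Y⟦n⟧, f = 0 := by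
    intro X hX n Y hY f
    let W : ObjectProperty.FullSubcategory fun X : T => IsZero (jS.obj X) := ⟨Y⟦n⟧, hker n Y hY⟩
    have h0 : (adj'.homEquiv X W).symm f = (adj'.homEquiv X W).symm 0 :=
      hX.eq_of_src _ _
    exact (adj'.homEquiv X W).symm.injective h0
  -- left orthogonal is contained in the kernel of `iL`
  have hD : ∀ X : T, (∀ (n : ℤ) (Y : T), IsZero (jS.obj Y) → ∀ f : X ⟶ Y⟦n⟧, f = 0) →
      IsZero (iL.obj X) := by
    intro X hX
    have hunit : adj'.unit.app X = 0 :=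
      hOrth0 X hX ((iL.obj X).obj) ((iL.obj X).property) _
    rw [IsZero.iff_id_eq_zero]
    apply (adj'.homEquiv (X) (iL.obj X)).injective
    rw [Adjunction.homEquiv_unit, Adjunction.homEquiv_unit]
    simp [hunit]
  constructor
  · ext X
    simp only [Set.mem_setOf_eq]
    exact ⟨fun h => hD X (hA X h), fun h => hB X (hC X h)⟩
  · ext X
    simp only [Set.mem_setOf_eq]
    exact ⟨hC X, hD X⟩
end

section
/- Let j^* : T → T'' be a triangulated functor admitting a fully faithful right adjoint j_*. Then the essential image of j_* equals the kernel of the right adjoint i^! of the inclusion ker j^* ↪ T, and both equal the right-orthogonal (ker j^*)^⊥ = { X : T(Σ^n Y, X) = 0 for all Y ∈ ker j^* and n ∈ ℤ }. -/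
open CategoryTheory Category Limits Pretriangulated Opposite

universe v₂ u₂ v₃ u₃

variable {T : Type u₂} [Category.{v₂} T] [HasZeroObject T] [HasShift T ℤ] [Preadditive T]
  [∀ n : ℤ, (shiftFunctor T n).Additive] [Pretriangulated T]
variable {T'' : Type u₃} [Category.{v₃} T''] [HasZeroObject T''] [HasShift T'' ℤ] [Preadditive T'']
  [∀ n : ℤ, (shiftFunctor T'' n).Additive] [Pretriangulated T'']

/-- If `j^*` admits a fully faithful right adjoint `j_*`, and `i^!` is a
right adjoint of the inclusion `ker j^* ↪ T`, then
`essim j_* = ker i^! = (ker j^*)^⊥`, where `(ker j^*)^⊥` consists of the objects `X` with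
`T(Σ^n Y, X) = 0` for all `Y ∈ ker j^*` and all `n ∈ ℤ`. -/
theorem stmt_9 (jS : T ⥤ T'') (jR : T'' ⥤ T)
    [jS.CommShift ℤ] [jR.CommShift ℤ] [jS.IsTriangulated] [jR.IsTriangulated]
    (adj : jS ⊣ jR) [jR.Full] [jR.Faithful]
    (iR : T ⥤ ObjectProperty.FullSubcategory fun X : T => IsZero (jS.obj X))
    (adj' : (ObjectProperty.ι fun X : T => IsZero (jS.obj X)) ⊣ iR) :
    ({X : T | ∃ Y : T'', Nonempty (jR.obj Y ≅ X)} = {X : T | IsZero (iR.obj X)}) ∧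
    ({X : T | IsZero (iR.obj X)} =
      {X : T | ∀ (n : ℤ) (Y : T), IsZero (jS.obj Y) → ∀ f : Y⟦n⟧ ⟶ X, f = 0}) := by
  -- Helper A : a map from an object of `ker jS` into anything in the image of `jR` is zero.
  have hA : ∀ {Z : T} {W : T''}, IsZero (jS.obj Z) → ∀ g : Z ⟶ jR.obj W, g = 0 := by
    intro Z W hZ g
    rw [← Equiv.apply_symm_apply (adj.homEquiv Z W) g,
      hZ.eq_of_src ((adj.homEquiv Z W).symm g) ((adj.homEquiv Z W).symm 0),
      Equiv.apply_symm_apply]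
  -- Helper C : `ker jS` is stable under shifts.
  have hC : ∀ (n : ℤ) (Y : T), IsZero (jS.obj Y) → IsZero (jS.obj (Y⟦n⟧)) := by
    intro n Y hY
    exact ((shiftFunctor T'' n).map_isZero hY).of_iso ((jS.commShiftIso n).app Y)
  -- Helper B : a map from an object of `ker jS` into an object of `ker iR` is zero.
  have hB : ∀ {W X : T}, IsZero (iR.obj X) → IsZero (jS.obj W) → ∀ g : W ⟶ X, g = 0 := by
    intro W X hX hW g
    have : (adj'.homEquiv ⟨W, hW⟩ X) g = (adj'.homEquiv ⟨W, hW⟩ X) 0 :=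
      hX.eq_of_tgt _ _
    exact (adj'.homEquiv ⟨W, hW⟩ X).injective this
  -- unshifted version of the orthogonality condition
  have horth : ∀ {X : T}, (∀ (n : ℤ) (Y : T), IsZero (jS.obj Y) → ∀ f : Y⟦n⟧ ⟶ X, f = 0) →
      ∀ (Y : T), IsZero (jS.obj Y) → ∀ f : Y ⟶ X, f = 0 := by
    intro X hX Y hY f
    have h0 := hX 0 Y hY ((shiftFunctorZero T ℤ).hom.app Y ≫ f)
    calc f = (shiftFunctorZero T ℤ).inv.app Y ≫ ((shiftFunctorZero T ℤ).hom.app Y ≫ f) := by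
          simp
      _ = 0 := by rw [h0, comp_zero]
  -- Inclusion 1 : essential image of `jR` ⊆ orthogonal
  have h1 : {X : T | ∃ Y : T'', Nonempty (jR.obj Y ≅ X)} ⊆
      {X : T | ∀ (n : ℤ) (Y : T), IsZero (jS.obj Y) → ∀ f : Y⟦n⟧ ⟶ X, f = 0} := by
    rintro X ⟨Y, ⟨e⟩⟩ n W hW f
    have : f ≫ e.inv = 0 := hA (hC n W hW) (f ≫ e.inv)
    calc f = (f ≫ e.inv) ≫ e.hom := by simp
      _ = 0 := by rw [this, zero_comp]
  -- Inclusion 2 : orthogonal ⊆ `ker iR`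
  have h2 : {X : T | ∀ (n : ℤ) (Y : T), IsZero (jS.obj Y) → ∀ f : Y⟦n⟧ ⟶ X, f = 0} ⊆
      {X : T | IsZero (iR.obj X)} := by
    intro X hX
    rw [Set.mem_setOf_eq, IsZero.iff_id_eq_zero]
    apply (adj'.homEquiv (iR.obj X) X).symm.injective
    have hz : ((adj'.homEquiv (iR.obj X) X).symm (𝟙 (iR.obj X)) :
        (ObjectProperty.ι fun X : T => IsZero (jS.obj X)).obj (iR.obj X) ⟶ X) = 0 :=
      horth hX _ (iR.obj X).2 _
    rw [hz, Adjunction.homEquiv_counit, Functor.map_zero, zero_comp]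
  -- Inclusion 3 : `ker iR` ⊆ essential image of `jR`
  have h3 : {X : T | IsZero (iR.obj X)} ⊆ {X : T | ∃ Y : T'', Nonempty (jR.obj Y ≅ X)} := by
    intro X hX
    obtain ⟨Z, f, h, dT⟩ := distinguished_cocone_triangle₁ (adj.unit.app X)
    -- the unit becomes an isomorphism after applying `jS`
    have hiso : IsIso (jS.map (adj.unit.app X)) := by
      have h1 : IsIso adj.counit := inferInstance
      have h2 : IsIso (adj.counit.app (jS.obj X)) := inferInstance
      have h3 : IsIso (𝟙 (jS.obj X)) := inferInstance
      exact IsIso.of_isIso_fac_right (adj.left_triangle_components X)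
    -- hence `Z` lies in `ker jS`
    have hZker : IsZero (jS.obj Z) :=
      Pretriangulated.Triangle.isZero₁_of_isIso₂ _ (jS.map_distinguished _ dT) hiso
    -- the map `f : Z ⟶ X` is zero
    have hf : f = 0 := hB hX hZker f
    -- deduce that `𝟙 (Z⟦1⟧)` factors through `jR.obj (jS.obj X)`
    obtain ⟨g, hg⟩ := Pretriangulated.Triangle.coyoneda_exact₁ _ dT (𝟙 (Z⟦(1:ℤ)⟧))
      (by change 𝟙 _ ≫ (shiftFunctor T (1:ℤ)).map f = 0; rw [id_comp]; change (shiftFunctor T (1:ℤ)).map f = 0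
          rw [hf, Functor.map_zero])
    have hg0 : g = 0 := hA (hC 1 Z hZker) g
    have hZ1 : IsZero (Z⟦(1:ℤ)⟧) := by
      rw [IsZero.iff_id_eq_zero, hg, hg0, zero_comp]
      rfl
    have hZ : IsZero Z := by
      have := (shiftFunctor T (-1 : ℤ)).map_isZero hZ1
      exact this.of_iso ((shiftEquiv T (1:ℤ)).unitIso.app Z)
    have : IsIso (adj.unit.app X) :=
      (Pretriangulated.Triangle.isZero₁_iff_isIso₂ _ dT).1 hZ
    exact ⟨jS.obj X, ⟨(asIso (adj.unit.app X)).symm⟩⟩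
  exact ⟨Set.Subset.antisymm (fun X hX => h2 (h1 hX)) h3,
    Set.Subset.antisymm (fun X hX => h1 (h3 hX)) h2⟩
end

section
/- Let (j_!, j^*, j_*) be an adjoint triple of triangulated functors between triangulated categories T and T'' such that at least one of j_! and j_* is fully faithful. Let i_* : ker j^* → T be the full inclusion. Then i_* admits both a left adjoint i^* and a right adjoint i^!, and the resulting diagram is a recollement (ker j^*, T, T''). -/
open CategoryTheory Category Limits Pretriangulated Opposite

universe v₂ u₂ v₃ u₃

variable {T : Type u₂} [Category.{v₂} T] [HasZeroObject T] [HasShift T ℤ] [Preadditive T]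
  [∀ n : ℤ, (shiftFunctor T n).Additive] [Pretriangulated T]
variable {T'' : Type u₃} [Category.{v₃} T''] [HasZeroObject T''] [HasShift T'' ℤ] [Preadditive T'']
  [∀ n : ℤ, (shiftFunctor T'' n).Additive] [Pretriangulated T'']

section Aux

variable {jS : T ⥤ T''} {jL jR : T'' ⥤ T}

/-- Any morphism from an object in the image of the left adjoint `jL` to an object killed by
`jS` vanishes. -/
lemma aux_zeroL (adj₃ : jL ⊣ jS) {A : T''} {Y : T} (hY : IsZero (jS.obj Y))
    (f : jL.obj A ⟶ Y) : f = 0 :=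
  (adj₃.homEquiv A Y).injective (hY.eq_of_tgt _ _)

/-- Any morphism from an object killed by `jS` to an object in the image of the right adjoint
`jR` vanishes. -/
lemma aux_zeroR (adj₄ : jS ⊣ jR) {B : T''} {Y : T} (hY : IsZero (jS.obj Y))
    (f : Y ⟶ jR.obj B) : f = 0 :=
  (adj₄.homEquiv Y B).symm.injective (hY.eq_of_src _ _)

lemma aux_zeroL_shift [jL.CommShift ℤ] (adj₃ : jL ⊣ jS) {A : T''} {Y : T}
    (hY : IsZero (jS.obj Y)) (f : (jL.obj A)⟦(1 : ℤ)⟧ ⟶ Y) : f = 0 := by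
  have h : (jL.commShiftIso (1 : ℤ)).hom.app A ≫ f = 0 := aux_zeroL adj₃ hY _
  calc f = (jL.commShiftIso (1 : ℤ)).inv.app A ≫ ((jL.commShiftIso (1 : ℤ)).hom.app A ≫ f) := by
        rw [← assoc, Iso.inv_hom_id_app, id_comp]
    _ = 0 := by rw [h, comp_zero]

lemma aux_zeroR_shift [jR.CommShift ℤ] (adj₄ : jS ⊣ jR) {B : T''} {Y : T}
    (hY : IsZero (jS.obj Y)) (f : Y ⟶ (jR.obj B)⟦(-1 : ℤ)⟧) : f = 0 := by
  have h : f ≫ (jR.commShiftIso (-1 : ℤ)).inv.app B = 0 := aux_zeroR adj₄ hY _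
  rw [← cancel_mono ((jR.commShiftIso (-1 : ℤ)).inv.app B), h, zero_comp]

end Aux

/-- Given an adjoint triple `(j_!, j^*, j_*)` of triangulated functors with
at least one of `j_!`, `j_*` fully faithful, the inclusion `i_* : ker j^* ↪ T` admits a
left adjoint `i^*` and a right adjoint `i^!` turning the diagram into a recollement
`(ker j^*, T, T'')`: `j^* i_* = 0`, the functors `i_*`, `j_!`, `j_*` are fully faithful,
and the two canonical exact triangles exist for every `X` in `T`. -/
theorem stmt_11 (jS : T ⥤ T'') (jL jR : T'' ⥤ T)
    [jS.CommShift ℤ] [jL.CommShift ℤ] [jR.CommShift ℤ]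
    [jS.IsTriangulated] [jL.IsTriangulated] [jR.IsTriangulated]
    (adj₃ : jL ⊣ jS) (adj₄ : jS ⊣ jR)
    (hff : (jL.Full ∧ jL.Faithful) ∨ (jR.Full ∧ jR.Faithful)) :
    ∃ (iL : T ⥤ ObjectProperty.FullSubcategory fun X : T => IsZero (jS.obj X))
      (iR : T ⥤ ObjectProperty.FullSubcategory fun X : T => IsZero (jS.obj X))
      (adj₁ : iL ⊣ ObjectProperty.ι fun X : T => IsZero (jS.obj X))
      (adj₂ : (ObjectProperty.ι fun X : T => IsZero (jS.obj X)) ⊣ iR),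
      (∀ Y : ObjectProperty.FullSubcategory fun X : T => IsZero (jS.obj X),
        IsZero (jS.obj ((ObjectProperty.ι fun X : T => IsZero (jS.obj X)).obj Y))) ∧
      (jL.Full ∧ jL.Faithful) ∧ (jR.Full ∧ jR.Faithful) ∧
      (∀ X : T,
        ∃ ψ : (ObjectProperty.ι fun X : T => IsZero (jS.obj X)).obj (iL.obj X) ⟶
            (jL.obj (jS.obj X))⟦(1 : ℤ)⟧,
          Triangle.mk (adj₃.counit.app X) (adj₁.unit.app X) ψ ∈ distTriang T) ∧
      (∀ X : T,
        ∃ ψ : jR.obj (jS.obj X) ⟶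
            ((ObjectProperty.ι fun X : T => IsZero (jS.obj X)).obj (iR.obj X))⟦(1 : ℤ)⟧,
          Triangle.mk (adj₂.counit.app X) (adj₄.unit.app X) ψ ∈ distTriang T) := by
  -- both `jL` and `jR` are fully faithful
  have hiso : IsIso adj₃.unit := by
    rcases hff with ⟨h1, h2⟩ | ⟨h1, h2⟩
    · haveI := h1; haveI := h2; infer_instance
    · haveI := h1; haveI := h2
      rw [(Adjunction.Triple.mk adj₃ adj₄).isIso_unit_iff_isIso_counit]
      infer_instance
  haveI := hiso
  have hL : jL.FullyFaithful := adj₃.fullyFaithfulLOfIsIsoUnit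
  have hR : jR.FullyFaithful := (Adjunction.Triple.mk adj₃ adj₄).fullyFaithfulEquiv hL
  haveI := hL.full; haveI := hL.faithful; haveI := hR.full; haveI := hR.faithful
  -- construction of `iL`
  choose ZL gL ψL memL using fun X : T => distinguished_cocone_triangle (adj₃.counit.app X)
  have hZ : ∀ X : T, IsZero (jS.obj (ZL X)) := fun X => by
    have hd := jS.map_distinguished _ (memL X)
    have h1 : IsIso (adj₃.unit.app (jS.obj X) ≫ jS.map (adj₃.counit.app X)) := by
      rw [adj₃.right_triangle_components X]; exact IsIso.id _
    have h2 : IsIso (jS.map (adj₃.counit.app X)) :=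
      IsIso.of_isIso_comp_left (adj₃.unit.app (jS.obj X)) _
    exact Triangle.isZero₃_of_isIso₁ _ hd h2
  have bijL : ∀ (X : T) (Y : ObjectProperty.FullSubcategory fun X : T => IsZero (jS.obj X)),
      Function.Bijective (fun φ : ZL X ⟶ Y.obj => gL X ≫ φ) := by
    intro X Y
    constructor
    · intro φ₁ φ₂ h
      have h0 : gL X ≫ (φ₁ - φ₂) = 0 := by
        simp only [Preadditive.comp_sub]
        rw [show gL X ≫ φ₁ = gL X ≫ φ₂ from h, sub_self]
      obtain ⟨g', hg'⟩ := Triangle.yoneda_exact₃ _ (memL X) (φ₁ - φ₂) h0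
      have : φ₁ - φ₂ = 0 := by
        have hz : g' = 0 := aux_zeroL_shift adj₃ Y.property g'
        rw [hg', hz, comp_zero]; rfl
      rw [sub_eq_zero] at this; exact this
    · intro f
      obtain ⟨g', hg'⟩ := Triangle.yoneda_exact₂ _ (memL X) f (aux_zeroL adj₃ Y.property _)
      exact ⟨g', hg'.symm⟩
  let eL : ∀ (X : T) (Y : ObjectProperty.FullSubcategory fun X : T => IsZero (jS.obj X)),
      ((⟨ZL X, hZ X⟩ : ObjectProperty.FullSubcategory fun X : T => IsZero (jS.obj X)) ⟶ Y) ≃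
        (X ⟶ (ObjectProperty.ι fun X : T => IsZero (jS.obj X)).obj Y) :=
    fun X Y => Equiv.trans { toFun := fun f => f.hom, invFun := fun f => ObjectProperty.homMk f, left_inv := fun _ => rfl, right_inv := fun _ => rfl } (Equiv.ofBijective _ (bijL X Y))
  have heL : ∀ X Y Y' (g : Y ⟶ Y') (h : (⟨ZL X, hZ X⟩ :
      ObjectProperty.FullSubcategory fun X : T => IsZero (jS.obj X)) ⟶ Y),
      eL X Y' (h ≫ g) = eL X Y h ≫
        (ObjectProperty.ι fun X : T => IsZero (jS.obj X)).map g := fun X Y Y' g h =>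
    (assoc _ _ _).symm
  let iL := Adjunction.leftAdjointOfEquiv eL heL
  let adj₁ := Adjunction.adjunctionOfEquivLeft eL heL
  have hunit : ∀ X : T, adj₁.unit.app X = gL X := by
    intro X
    show eL X _ (𝟙 _) = gL X
    show gL X ≫ 𝟙 _ = gL X
    rw [comp_id]
  -- construction of `iR`
  choose WR wR hψR memR using fun X : T => distinguished_cocone_triangle₁ (adj₄.unit.app X)
  have hW : ∀ X : T, IsZero (jS.obj (WR X)) := fun X => by
    have hd := jS.map_distinguished _ (memR X)
    have h1 : IsIso (jS.map (adj₄.unit.app X) ≫ adj₄.counit.app (jS.obj X)) := by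
      rw [adj₄.left_triangle_components X]; exact IsIso.id _
    have h2 : IsIso (jS.map (adj₄.unit.app X)) :=
      IsIso.of_isIso_comp_right _ (adj₄.counit.app (jS.obj X))
    exact Triangle.isZero₁_of_isIso₂ _ hd h2
  have bijR : ∀ (Y : ObjectProperty.FullSubcategory fun X : T => IsZero (jS.obj X)) (X : T),
      Function.Bijective (fun ψ : Y.obj ⟶ WR X => (show Y.obj ⟶ WR X from ψ) ≫ wR X) := by
    intro Y X
    constructor
    · intro ψ₁ ψ₂ h
      have h0 : ((show Y.obj ⟶ WR X from ψ₁) - ψ₂) ≫ wR X = 0 := by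
        simp only [Preadditive.sub_comp]
        rw [show (show Y.obj ⟶ WR X from ψ₁) ≫ wR X =
          (show Y.obj ⟶ WR X from ψ₂) ≫ wR X from h, sub_self]
      obtain ⟨g', hg'⟩ := Triangle.coyoneda_exact₂ _
        (inv_rot_of_distTriang _ (memR X)) ((show Y.obj ⟶ WR X from ψ₁) - ψ₂) h0
      have hz : g' = 0 := aux_zeroR_shift adj₄ Y.property g'
      have : (show Y.obj ⟶ WR X from ψ₁) - ψ₂ = 0 := by rw [hg', hz, zero_comp]; rfl
      rw [sub_eq_zero] at this; exact this
    · intro f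
      obtain ⟨g', hg'⟩ := Triangle.coyoneda_exact₂ _ (memR X) f (aux_zeroR adj₄ Y.property _)
      exact ⟨g', hg'.symm⟩
  let bR : ∀ (Y : ObjectProperty.FullSubcategory fun X : T => IsZero (jS.obj X)) (X : T),
      (Y ⟶ (⟨WR X, hW X⟩ : ObjectProperty.FullSubcategory fun X : T => IsZero (jS.obj X))) ≃
        ((ObjectProperty.ι fun X : T => IsZero (jS.obj X)).obj Y ⟶ X) :=
    fun Y X => Equiv.trans { toFun := fun f => f.hom, invFun := fun f => ObjectProperty.homMk f, left_inv := fun _ => rfl, right_inv := fun _ => rfl } (Equiv.ofBijective _ (bijR Y X))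
  let eR : ∀ (Y : ObjectProperty.FullSubcategory fun X : T => IsZero (jS.obj X)) (X : T),
      ((ObjectProperty.ι fun X : T => IsZero (jS.obj X)).obj Y ⟶ X) ≃
        (Y ⟶ (⟨WR X, hW X⟩ : ObjectProperty.FullSubcategory fun X : T => IsZero (jS.obj X))) :=
    fun Y X => (bR Y X).symm
  have heR : ∀ Y' Y X (f : Y' ⟶ Y)
      (g : (ObjectProperty.ι fun X : T => IsZero (jS.obj X)).obj Y ⟶ X),
      eR Y' X ((ObjectProperty.ι fun X : T => IsZero (jS.obj X)).map f ≫ g) =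
        f ≫ eR Y X g := by
    intro Y' Y X f g
    refine (bR Y' X).injective ?_
    have l1 : ∀ (A : ObjectProperty.FullSubcategory fun X : T => IsZero (jS.obj X))
        (x : (ObjectProperty.ι fun X : T => IsZero (jS.obj X)).obj A ⟶ X),
        (bR A X) (eR A X x) = x := fun A x => (bR A X).apply_symm_apply x
    have r1 : (bR Y' X) (f ≫ eR Y X g) =
        ((ObjectProperty.ι fun X : T => IsZero (jS.obj X)).map f ≫
          (show Y.obj ⟶ WR X from (eR Y X g).hom)) ≫ wR X := rfl
    rw [l1, r1, assoc]
    have r2 : (show Y.obj ⟶ WR X from (eR Y X g).hom) ≫ wR X = g := (bR Y X).apply_symm_apply g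
    rw [r2]
  let iR := Adjunction.rightAdjointOfEquiv eR heR
  let adj₂ := Adjunction.adjunctionOfEquivRight eR heR
  have hcounit : ∀ X : T, adj₂.counit.app X = wR X := by
    intro X
    show (eR _ X).symm (𝟙 _) = wR X
    show (𝟙 (WR X) : WR X ⟶ WR X) ≫ wR X = wR X
    rw [id_comp]
  -- assembling everything
  refine ⟨iL, iR, adj₁, adj₂, fun Y => Y.property, ⟨inferInstance, inferInstance⟩,
    ⟨inferInstance, inferInstance⟩, fun X => ⟨ψL X, ?_⟩, fun X => ⟨hψR X, ?_⟩⟩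
  · rw [hunit X]; exact memL X
  · rw [hcounit X]; exact memR X
end

section
/- Let F : T → T' be a coproduct-preserving, fully faithful triangulated functor between triangulated categories with coproducts. If C is a compact object of T, then F(C) is self-compact in T', i.e., the restriction of T'(F(C), −) to the localizing subcategory ⟨F(C)⟩ generated by F(C) preserves coproducts. -/
open CategoryTheory Category Limits Pretriangulated Opposite

universe w v u v' u'

variable (T : Type u) [Category.{v} T] [HasZeroObject T] [HasShift T ℤ] [Preadditive T]
  [∀ n : ℤ, (shiftFunctor T n).Additive] [Pretriangulated T] [HasCoproducts.{w} T]

section Bridge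

universe ww vv

variable {ι : Type ww} [DecidableEq ι] {K : Discrete ι ⥤ AddCommGrpCat.{vv}} (c : Cocone K)

/-- The canonical comparison map from the direct sum to the point of a cocone over a
discrete diagram in `AddCommGrp`. -/
noncomputable def cmpHom : DirectSum ι (fun k => (K.obj ⟨k⟩ : AddCommGrpCat.{vv})) →+ c.pt :=
  DirectSum.toAddMonoid (fun k => (c.ι.app ⟨k⟩).hom)

lemma cmpHom_of (k : ι) (y : K.obj ⟨k⟩) :
    cmpHom c (DirectSum.of (fun k => (K.obj ⟨k⟩ : AddCommGrpCat.{vv})) k y) = c.ι.app ⟨k⟩ y :=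
  DirectSum.toAddMonoid_of _ _ _

lemma bijective_cmpHom_of_isColimit (hc : IsColimit c) : Function.Bijective (cmpHom c) := by
  constructor
  · -- injectivity, via the "projections" obtained from the universal property
    have hπ : ∀ j : ι, ∃ π : (c.pt : AddCommGrpCat.{vv}) ⟶ K.obj ⟨j⟩,
        ∀ (k : ι) (y : K.obj ⟨k⟩),
          π (c.ι.app ⟨k⟩ y) =
            (DirectSum.of (fun k => (K.obj ⟨k⟩ : AddCommGrpCat.{vv})) k y) j := by
      intro j
      let s : Cocone K :=
        { pt := K.obj ⟨j⟩
          ι := Discrete.natTrans (fun k =>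
            if h : k = ⟨j⟩ then eqToHom (by rw [h]; rfl) else 0) }
      refine ⟨hc.desc s, fun k y => ?_⟩
      have hfac := hc.fac s ⟨k⟩
      have : hc.desc s (c.ι.app ⟨k⟩ y) = s.ι.app ⟨k⟩ y := by
        rw [← hfac]; rfl
      rw [this]
      by_cases h : k = j
      · subst h
        simp [s, DirectSum.of_eq_same]
      · have h' : (⟨k⟩ : Discrete ι) ≠ ⟨j⟩ := by
          simp [Discrete.ext_iff, h]
        have hz : s.ι.app ⟨k⟩ = 0 := by simp [s, h']
        rw [hz, DirectSum.of_eq_of_ne _ _ _ (Ne.symm h)]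
        rfl
    rw [injective_iff_map_eq_zero]
    intro a ha
    refine DFinsupp.ext fun j => ?_
    obtain ⟨π, hπj⟩ := hπ j
    have : π.hom.comp (cmpHom c) =
        DFinsupp.evalAddMonoidHom j := by
      apply DirectSum.addHom_ext
      intro k y
      rw [AddMonoidHom.comp_apply, cmpHom_of]; exact hπj k y
    have ha' := DFunLike.congr_fun this a
    simp only [AddMonoidHom.comp_apply, ha, map_zero] at ha'
    exact ha'.symm
  · -- surjectivity, via a quotient argument
    intro p
    set R := (cmpHom c).range with hR
    let Q : AddCommGrpCat.{vv} := AddCommGrpCat.of ((c.pt : AddCommGrpCat.{vv}) ⧸ R)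
    let q : (c.pt : AddCommGrpCat.{vv}) ⟶ Q := AddCommGrpCat.ofHom (QuotientAddGroup.mk' R)
    let s : Cocone K := { pt := Q, ι := Discrete.natTrans (fun _ => 0) }
    have h1 : ∀ (k : Discrete ι), c.ι.app k ≫ q = s.ι.app k := by
      rintro ⟨k⟩
      ext y
      show q (c.ι.app ⟨k⟩ y) = 0
      rw [show q (c.ι.app ⟨k⟩ y) = QuotientAddGroup.mk' R (c.ι.app ⟨k⟩ y) from rfl,
        QuotientAddGroup.mk'_apply, QuotientAddGroup.eq_zero_iff]
      exact ⟨DirectSum.of (fun k => (K.obj ⟨k⟩ : AddCommGrpCat.{vv})) k y, cmpHom_of c k y⟩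
    have h2 : ∀ (k : Discrete ι), c.ι.app k ≫ (0 : c.pt ⟶ Q) = s.ι.app k := by
      intro k; simp [s]
    have hq : q = 0 := (hc.uniq s q h1).trans (hc.uniq s 0 h2).symm
    have : QuotientAddGroup.mk' R p = 0 := by
      rw [show QuotientAddGroup.mk' R p = q p from rfl, hq]; rfl
    rw [QuotientAddGroup.mk'_apply, QuotientAddGroup.eq_zero_iff] at this
    exact this

noncomputable def isColimitOfBijectiveCmpHom (hb : Function.Bijective (cmpHom c)) :
    IsColimit c := by
  let e := AddEquiv.ofBijective (cmpHom c) hb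
  have he : ∀ (k : ι) (y : K.obj ⟨k⟩),
      e.symm (c.ι.app ⟨k⟩ y) =
        DirectSum.of (fun k => (K.obj ⟨k⟩ : AddCommGrpCat.{vv})) k y := by
    intro k y
    rw [AddEquiv.symm_apply_eq]
    exact (cmpHom_of c k y).symm
  exact
    { desc := fun s =>
        AddCommGrpCat.ofHom ((DirectSum.toAddMonoid
          (fun k => (s.ι.app ⟨k⟩).hom)).comp e.symm.toAddMonoidHom)
      fac := by
        rintro s ⟨k⟩
        ext y
        show (DirectSum.toAddMonoid (fun k => (s.ι.app ⟨k⟩).hom))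
          (e.symm (c.ι.app ⟨k⟩ y)) = s.ι.app ⟨k⟩ y
        rw [he k y, DirectSum.toAddMonoid_of]
      uniq := by
        intro s m hm
        ext p
        obtain ⟨a, rfl⟩ := hb.2 p
        have h1 : m.hom.comp (cmpHom c) =
            DirectSum.toAddMonoid (fun k => (s.ι.app ⟨k⟩).hom) := by
          apply DirectSum.addHom_ext
          intro k y
          show m (cmpHom c (DirectSum.of _ k y)) = _
          rw [cmpHom_of, DirectSum.toAddMonoid_of]
          exact ConcreteCategory.congr_hom (hm ⟨k⟩) y
        have h2 : e.symm (cmpHom c a) = a := e.symm_apply_apply a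
        show m (cmpHom c a) = (DirectSum.toAddMonoid
          (fun k => (s.ι.app ⟨k⟩).hom)) (e.symm (cmpHom c a))
        rw [h2, ← h1]
        rfl }

end Bridge

section Aux

variable {T}
variable {T' : Type u'} [Category.{v'} T'] [HasZeroObject T'] [HasShift T' ℤ]
    [Preadditive T'] [∀ n : ℤ, (shiftFunctor T' n).Additive] [Pretriangulated T']
    [HasCoproducts.{w} T']
    (F : T ⥤ T')

/-- `F.map` as an additive equivalence on hom groups, for `F` additive fully faithful. -/
noncomputable def mapAddEquiv [F.Full] [F.Faithful] [F.Additive] (A B : T) :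
    (A ⟶ B) ≃+ (F.obj A ⟶ F.obj B) where
  toFun := F.map
  invFun := F.preimage
  left_inv g := F.preimage_map g
  right_inv g := F.map_preimage g
  map_add' := fun _ _ => F.map_add

variable [F.Full] [F.Faithful] [F.CommShift ℤ] [F.IsTriangulated]
    [∀ ι : Type w, PreservesColimitsOfShape (Discrete ι) F]

/-- The essential image of a fully faithful, coproduct-preserving triangulated functor is
localizing. -/
lemma essImage_isLocalizing : IsLocalizing.{w} T' F.essImage := by
  refine ⟨?_, ?_, ?_, ?_⟩
  · rintro X ⟨A, ⟨e⟩⟩ Y ⟨e'⟩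
    exact ⟨A, ⟨e ≪≫ e'⟩⟩
  · rintro X ⟨A, ⟨e⟩⟩ n
    exact ⟨A⟦n⟧, ⟨(F.commShiftIso n).app A ≪≫ (shiftFunctor T' n).mapIso e⟩⟩
  · rintro Tr hTr ⟨A₁, ⟨e₁⟩⟩ ⟨A₂, ⟨e₂⟩⟩
    set g : A₁ ⟶ A₂ := F.preimage (e₁.hom ≫ Tr.mor₁ ≫ e₂.inv) with hg
    obtain ⟨Z, a, b, hT⟩ := Pretriangulated.distinguished_cocone_triangle g
    have hFT := F.map_distinguished _ hT
    have comm : (F.mapTriangle.obj (Triangle.mk g a b)).mor₁ ≫ e₂.hom =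
        e₁.hom ≫ Tr.mor₁ := by
      show F.map g ≫ e₂.hom = _
      rw [hg, F.map_preimage]
      simp
    have e := Pretriangulated.isoTriangleOfIso₁₂ _ _ hFT hTr e₁ e₂ comm
    exact ⟨Z, ⟨Triangle.π₃.mapIso e⟩⟩
  · intro ι f hf
    choose x hx using hf
    refine ⟨∐ x, ⟨?_⟩⟩
    refine preservesColimitIso F (Discrete.functor x) ≪≫
      HasColimit.isoOfNatIso (Discrete.natIso (fun ⟨k⟩ => (hx k).some))

end Aux

/-- If `F : T ⥤ T'` is a coproduct-preserving, fully faithful triangulated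
functor and `C` is compact in `T`, then `F(C)` is self-compact in `T'`: the restriction
of `T'(F(C), −)` to the localizing subcategory `⟨F(C)⟩` preserves coproducts. -/
theorem stmt_14 (T' : Type u') [Category.{v'} T'] [HasZeroObject T'] [HasShift T' ℤ]
    [Preadditive T'] [∀ n : ℤ, (shiftFunctor T' n).Additive] [Pretriangulated T']
    [HasCoproducts.{w} T']
    (F : T ⥤ T') [F.Full] [F.Faithful] [F.CommShift ℤ] [F.IsTriangulated]
    [∀ ι : Type w, PreservesColimitsOfShape (Discrete ι) F]
    (C : T)
    (hC : ∀ ι : Type w, PreservesColimitsOfShape (Discrete ι)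
      (preadditiveCoyoneda.obj (op C))) :
    ∀ (ι : Type w) (f : ι → T'), (∀ k, f k ∈ locClosure.{w} T' {F.obj C}) →
      PreservesColimit (Discrete.functor f) (preadditiveCoyoneda.obj (op (F.obj C))) := by
  intro ι f hf
  letI := Classical.decEq ι
  -- every `f k` lies in the essential image of `F`
  have hsub : ∀ k, F.essImage (f k) := by
    intro k
    exact hf k F.essImage ⟨essImage_isLocalizing F,
      by rintro Y rfl; exact ⟨C, ⟨Iso.refl _⟩⟩⟩
  choose x hx using hsub
  have ediag : Discrete.functor x ⋙ F ≅ Discrete.functor f :=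
    Discrete.natIso (fun ⟨k⟩ => (hx k).some)
  set G := preadditiveCoyoneda.obj (op (F.obj C)) with hG
  set c0 := colimit.cocone (Discrete.functor x) with hc0
  have h₁ : IsColimit (F.mapCocone c0) := isColimitOfPreserves F (colimit.isColimit _)
  -- the `T`-side cocone is a colimit by compactness of `C`
  have := hC ι
  have hcT : IsColimit ((preadditiveCoyoneda.obj (op C)).mapCocone c0) :=
    isColimitOfPreserves (preadditiveCoyoneda.obj (op C)) (colimit.isColimit _)
  set cT := (preadditiveCoyoneda.obj (op C)).mapCocone c0 with hcT'
  have bijT : Function.Bijective (cmpHom cT) := bijective_cmpHom_of_isColimit cT hcT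
  -- transfer bijectivity across `F.map`
  set cc := G.mapCocone (F.mapCocone c0) with hcc
  let eSig : DirectSum ι (fun k => ((Discrete.functor x ⋙ preadditiveCoyoneda.obj (op C)).obj ⟨k⟩ :
        AddCommGrpCat.{v})) ≃+
      DirectSum ι (fun k => (((Discrete.functor x ⋙ F) ⋙ G).obj ⟨k⟩ : AddCommGrpCat.{v'})) :=
    DFinsupp.mapRange.addEquiv (fun k => mapAddEquiv F C (x k))
  let ePt : (C ⟶ c0.pt) ≃+ (F.obj C ⟶ F.obj c0.pt) := mapAddEquiv F C c0.pt
  have key : (cmpHom cc).comp eSig.toAddMonoidHom =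
      ePt.toAddMonoidHom.comp (cmpHom cT) := by
    apply DirectSum.addHom_ext
    intro k y
    have h1 : eSig.toAddMonoidHom (DirectSum.of _ k y) =
        DirectSum.of (fun k => (((Discrete.functor x ⋙ F) ⋙ G).obj ⟨k⟩ : AddCommGrpCat.{v'}))
          k (F.map y) := by
      exact DFinsupp.mapRange_single (f := fun k => mapAddEquiv F C (x k))
        (hf := fun k => map_zero _) (i := k) (b := y)
    show cmpHom cc (eSig.toAddMonoidHom (DirectSum.of _ k y)) = ePt (cmpHom cT (DirectSum.of _ k y))
    rw [h1]; erw [cmpHom_of, cmpHom_of]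
    show F.map y ≫ F.map (c0.ι.app ⟨k⟩) = F.map (y ≫ c0.ι.app ⟨k⟩)
    exact (F.map_comp (X := C) y _).symm
  have bijcc : Function.Bijective (cmpHom cc) := by
    have : (cmpHom cc : _ → _) = (ePt : _ → _) ∘ (cmpHom cT) ∘ (eSig.symm : _ → _) := by
      funext a
      have h := DFunLike.congr_fun key (eSig.symm a)
      simp only [AddMonoidHom.comp_apply, AddEquiv.coe_toAddMonoidHom,
        AddEquiv.apply_symm_apply] at h
      exact h
    rw [this]
    exact ePt.bijective.comp (bijT.comp eSig.symm.bijective)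
  have h₂ : IsColimit (G.mapCocone (F.mapCocone c0)) := isColimitOfBijectiveCmpHom cc bijcc
  have : PreservesColimit (Discrete.functor x ⋙ F) G :=
    preservesColimit_of_preserves_colimit_cocone h₁ h₂
  exact preservesColimit_of_iso_diagram G ediag
end
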